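/- Let C, D : ℕ → [-1,1] be functions on primes satisfying pair Sato-Tate equidistribution: for all intervals I₁, I₂ ⊆ [-1,1], #{p ≤ x prime : C(p) ∈ I₁, D(p) ∈ I₂}/π(x) → μ_ST(I₁)·μ_ST(I₂). Let χ₁, χ₂ : ℕ → {-1,0,1} and define a(p) = C(p) - χ₁(p)/(2√p), b(p) = D(p) - χ₂(p)/(2√p). Then the set of primes p with a(p)·b(p) < 0 has natural density 1/2. -/

import Mathlib

open MeasureTheory Filter Real Set

noncomputable def muST : Measure ℝ :=
  (volume.restrict (Icc (-1 : ℝ) 1)).withDensity fun t =>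
    ENNReal.ofReal ((2 / π) * Real.sqrt (1 - t ^ 2))

open scoped Classical in
noncomputable def primeCount (S : Set ℕ) (x : ℕ) : ℕ :=
  ((Finset.range (x + 1)).filter fun p => p.Prime ∧ p ∈ S).card

noncomputable def primePi (x : ℕ) : ℕ :=
  ((Finset.range (x + 1)).filter Nat.Prime).card

def HasNaturalDensity (S : Set ℕ) (δ : ℝ) : Prop :=
  Tendsto (fun x : ℕ => (primeCount S x : ℝ) / (primePi x : ℝ)) atTop (nhds δ)

def PairSatoTateEquidistributed (C D : ℕ → ℝ) : Prop :=
  ∀ a₁ b₁ a₂ b₂ : ℝ, -1 ≤ a₁ → a₁ ≤ b₁ → b₁ ≤ 1 → -1 ≤ a₂ → a₂ ≤ b₂ → b₂ ≤ 1 →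
    Tendsto
      (fun x : ℕ =>
        (primeCount {p | C p ∈ Icc a₁ b₁ ∧ D p ∈ Icc a₂ b₂} x : ℝ) / (primePi x : ℝ))
      atTop (nhds ((muST (Icc a₁ b₁)).toReal * (muST (Icc a₂ b₂)).toReal))

section Aux

lemma stCont : Continuous fun t : ℝ => (2 / π) * Real.sqrt (1 - t ^ 2) :=
  continuous_const.mul (Real.continuous_sqrt.comp (continuous_const.sub (continuous_pow 2)))

noncomputable def stI (a b : ℝ) : ℝ := ∫ t in a..b, (2 / π) * Real.sqrt (1 - t ^ 2)

lemma muST_Icc (a b : ℝ) (ha : -1 ≤ a) (hab : a ≤ b) (hb : b ≤ 1) :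
    (muST (Icc a b)).toReal = stI a b := by
  have hsub : Icc a b ⊆ Icc (-1 : ℝ) 1 := Icc_subset_Icc ha hb
  have h1 : muST (Icc a b)
      = ∫⁻ t in Icc a b, ENNReal.ofReal ((2 / π) * Real.sqrt (1 - t ^ 2)) ∂volume := by
    rw [muST, withDensity_apply _ measurableSet_Icc, Measure.restrict_restrict measurableSet_Icc,
      Set.inter_eq_left.mpr hsub]
  have h2 : ∫ t in Icc a b, (2 / π) * Real.sqrt (1 - t ^ 2) ∂volume
      = (∫⁻ t in Icc a b, ENNReal.ofReal ((2 / π) * Real.sqrt (1 - t ^ 2)) ∂volume).toReal :=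
    integral_eq_lintegral_of_nonneg_ae (ae_of_all _ fun t => by positivity)
      stCont.aestronglyMeasurable
  rw [stI, h1, intervalIntegral.integral_of_le hab, ← integral_Icc_eq_integral_Ioc, h2]

lemma stI_intble (a b : ℝ) :
    IntervalIntegrable (fun t : ℝ => (2 / π) * Real.sqrt (1 - t ^ 2)) volume a b :=
  stCont.intervalIntegrable a b

lemma stI_add (a b c : ℝ) : stI a b + stI b c = stI a c :=
  intervalIntegral.integral_add_adjacent_intervals (stI_intble a b) (stI_intble b c)

lemma stI_total : stI (-1) 1 = 1 := by
  rw [stI, intervalIntegral.integral_const_mul, integral_sqrt_one_sub_sq]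
  field_simp

lemma stI_nonneg {a b : ℝ} (h : a ≤ b) : 0 ≤ stI a b :=
  intervalIntegral.integral_nonneg h (fun t _ => by positivity)

lemma stI_le {a b : ℝ} (h : a ≤ b) : stI a b ≤ b - a := by
  have : stI a b ≤ ∫ _ in a..b, (1 : ℝ) := by
    apply intervalIntegral.integral_mono_on h (stI_intble a b) intervalIntegrable_const
    intro t _
    have h1 : Real.sqrt (1 - t ^ 2) ≤ 1 := Real.sqrt_le_one.mpr (by nlinarith [sq_nonneg t])
    have h2 : 2 / π ≤ 1 := by
      rw [div_le_one Real.pi_pos]; exact Real.two_le_pi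
    nlinarith [Real.sqrt_nonneg (1 - t ^ 2)]
  simpa using this

lemma stI_symm : stI (-1) 0 = stI 0 1 := by
  have h := intervalIntegral.integral_comp_neg (a := (0 : ℝ)) (b := 1)
    (fun t : ℝ => (2 / π) * Real.sqrt (1 - t ^ 2))
  simp only [neg_sq, neg_zero] at h
  rw [stI, stI, ← h]

lemma stI_right_half : stI 0 1 = 1 / 2 := by
  have h := stI_add (-1) 0 1
  rw [stI_total] at h
  have := stI_symm
  linarith

lemma stI_left_half : stI (-1) 0 = 1 / 2 := by rw [stI_symm, stI_right_half]

open scoped Classical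

lemma primeCount_mono {S S' : Set ℕ} (h : ∀ p, p.Prime → p ∈ S → p ∈ S') (x : ℕ) :
    primeCount S x ≤ primeCount S' x := by
  apply Finset.card_le_card
  intro p hp
  simp only [Finset.mem_filter] at hp ⊢
  exact ⟨hp.1, hp.2.1, h p hp.2.1 hp.2.2⟩

lemma primeCount_union_le (S S' : Set ℕ) (x : ℕ) :
    primeCount (S ∪ S') x ≤ primeCount S x + primeCount S' x := by
  unfold primeCount
  refine le_trans (Finset.card_le_card ?_) (Finset.card_union_le _ _)
  intro p hp
  simp only [Finset.mem_filter, Finset.mem_union, Set.mem_union] at hp ⊢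
  tauto

lemma primeCount_union_ge {S S' : Set ℕ} (h : Disjoint S S') (x : ℕ) :
    primeCount S x + primeCount S' x ≤ primeCount (S ∪ S') x := by
  unfold primeCount
  rw [← Finset.card_union_of_disjoint ?_]
  · apply Finset.card_le_card
    intro p hp
    simp only [Finset.mem_filter, Finset.mem_union, Set.mem_union] at hp ⊢
    tauto
  · rw [Finset.disjoint_left]
    intro p hp hp'
    simp only [Finset.mem_filter] at hp hp'
    exact Set.disjoint_left.mp h hp.2.2 hp'.2.2

lemma primeCount_le_add_const {S S' : Set ℕ} {K : ℕ}
    (h : ∀ p, p.Prime → p ∈ S → p ∈ S' ∨ p ≤ K) (x : ℕ) :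
    primeCount S x ≤ primeCount S' x + (K + 1) := by
  have h1 : primeCount S x ≤ primeCount (S' ∪ {p | p ≤ K}) x :=
    primeCount_mono (fun p hp hps => by simpa using h p hp hps) x
  have h2 := primeCount_union_le S' {p | p ≤ K} x
  have h3 : primeCount {p | p ≤ K} x ≤ K + 1 := by
    calc primeCount {p | p ≤ K} x ≤ (Finset.range (K + 1)).card := by
          apply Finset.card_le_card
          intro p hp
          simp only [Finset.mem_filter, Finset.mem_range, Set.mem_setOf_eq] at hp ⊢
          omega
      _ = K + 1 := Finset.card_range _
  omega

lemma primePi_eq : primePi = Nat.primeCounting := by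
  funext x
  rw [primePi, Nat.primeCounting, Nat.primeCounting', Nat.count_eq_card_filter_range]

lemma primePi_tendsto : Tendsto primePi atTop atTop := primePi_eq ▸ Nat.tendsto_primeCounting

end Aux

theorem density_half_product_neg (C D : ℕ → ℝ) (χ₁ χ₂ : ℕ → ℝ)
    (hC : ∀ p : ℕ, p.Prime → C p ∈ Icc (-1 : ℝ) 1)
    (hD : ∀ p : ℕ, p.Prime → D p ∈ Icc (-1 : ℝ) 1)
    (hχ₁ : ∀ p : ℕ, χ₁ p = -1 ∨ χ₁ p = 0 ∨ χ₁ p = 1)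
    (hχ₂ : ∀ p : ℕ, χ₂ p = -1 ∨ χ₂ p = 0 ∨ χ₂ p = 1)
    (hST : PairSatoTateEquidistributed C D) :
    HasNaturalDensity
      {p | (C p - χ₁ p / (2 * Real.sqrt p)) * (D p - χ₂ p / (2 * Real.sqrt p)) < 0}
      (1 / 2) := by
  unfold HasNaturalDensity
  rw [Metric.tendsto_nhds]
  intro δ hδ
  set T : Set ℕ :=
    {p | (C p - χ₁ p / (2 * Real.sqrt p)) * (D p - χ₂ p / (2 * Real.sqrt p)) < 0} with hT
  set ε : ℝ := min (δ / 8) (1 / 2) with hεdef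
  have hε0 : 0 < ε := lt_min (by linarith) (by norm_num)
  have hεhalf : ε ≤ 1 / 2 := min_le_right _ _
  have hεδ : ε ≤ δ / 8 := min_le_left _ _
  set K : ℕ := ⌈(1 / (2 * ε)) ^ 2⌉₊ with hKdef
  -- perturbation bound
  have hpert : ∀ p : ℕ, p.Prime → K < p → ∀ c : ℝ, (c = -1 ∨ c = 0 ∨ c = 1) →
      |c / (2 * Real.sqrt p)| < ε := by
    intro p hp hKp c hc
    have hsq : 1 / (2 * ε) < Real.sqrt p := by
      apply Real.lt_sqrt_of_sq_lt
      have h1 : ((1 / (2 * ε)) ^ 2 : ℝ) ≤ K := Nat.le_ceil _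
      have h2 : (K : ℝ) < p := by exact_mod_cast hKp
      linarith
    have hs0 : 0 < Real.sqrt p := lt_of_le_of_lt (by positivity) hsq
    have habs : |c| ≤ 1 := by rcases hc with h | h | h <;> simp [h]
    have hle : |c / (2 * Real.sqrt p)| ≤ 1 / (2 * Real.sqrt p) := by
      rw [abs_div, abs_of_pos (by positivity : (0 : ℝ) < 2 * Real.sqrt p)]
      gcongr
    have hlt : 1 / (2 * Real.sqrt p) < ε := by
      rw [div_lt_iff₀ (by positivity)]
      calc (1 : ℝ) = 2 * ε * (1 / (2 * ε)) := by field_simp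
        _ < 2 * ε * Real.sqrt p := by
            exact mul_lt_mul_of_pos_left hsq (by positivity)
        _ = ε * (2 * Real.sqrt p) := by ring
    linarith
  -- the four auxiliary sets
  set S1 : Set ℕ := {p | C p ∈ Icc ε 1 ∧ D p ∈ Icc (-1) (-ε)} with hS1
  set S2 : Set ℕ := {p | C p ∈ Icc (-1) (-ε) ∧ D p ∈ Icc ε 1} with hS2
  set S3 : Set ℕ := {p | C p ∈ Icc (-ε) 1 ∧ D p ∈ Icc (-1) ε} with hS3
  set S4 : Set ℕ := {p | C p ∈ Icc (-1) ε ∧ D p ∈ Icc (-ε) 1} with hS4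
  -- inclusions
  have hlow : ∀ p, p.Prime → p ∈ S1 ∪ S2 → p ∈ T ∨ p ≤ K := by
    intro p hp hps
    by_cases hKp : p ≤ K
    · exact Or.inr hKp
    left
    push_neg at hKp
    have h1 := abs_lt.mp (hpert p hp hKp (χ₁ p) (hχ₁ p))
    have h2 := abs_lt.mp (hpert p hp hKp (χ₂ p) (hχ₂ p))
    show (C p - χ₁ p / (2 * Real.sqrt p)) * (D p - χ₂ p / (2 * Real.sqrt p)) < 0
    rcases hps with hps | hps
    · obtain ⟨⟨hc1, _⟩, ⟨_, hd2⟩⟩ := hps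
      exact mul_neg_of_pos_of_neg (by linarith [h1.2]) (by linarith [h2.1])
    · obtain ⟨⟨_, hc2⟩, ⟨hd1, _⟩⟩ := hps
      exact mul_neg_of_neg_of_pos (by linarith [h1.1]) (by linarith [h2.2])
  have hup : ∀ p, p.Prime → p ∈ T → p ∈ S3 ∪ S4 ∨ p ≤ K := by
    intro p hp hpT
    by_cases hKp : p ≤ K
    · exact Or.inr hKp
    left
    push_neg at hKp
    have h1 := abs_lt.mp (hpert p hp hKp (χ₁ p) (hχ₁ p))
    have h2 := abs_lt.mp (hpert p hp hKp (χ₂ p) (hχ₂ p))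
    obtain ⟨hC1, hC2⟩ := hC p hp
    obtain ⟨hD1, hD2⟩ := hD p hp
    have hpT' : (C p - χ₁ p / (2 * Real.sqrt p)) * (D p - χ₂ p / (2 * Real.sqrt p)) < 0 := hpT
    rcases mul_neg_iff.mp hpT' with ⟨ha, hb⟩ | ⟨ha, hb⟩
    · exact Or.inl ⟨⟨by linarith, hC2⟩, ⟨hD1, by linarith⟩⟩
    · exact Or.inr ⟨⟨hC1, by linarith⟩, ⟨by linarith, hD2⟩⟩
  -- S1 and S2 are disjoint
  have hdisj : Disjoint S1 S2 := by
    rw [Set.disjoint_left]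
    rintro p ⟨⟨h1, _⟩, _⟩ ⟨⟨_, h2⟩, _⟩
    linarith
  -- counting inequalities
  have hcount_low : ∀ x, primeCount S1 x + primeCount S2 x ≤ primeCount T x + (K + 1) :=
    fun x => le_trans (primeCount_union_ge hdisj x) (primeCount_le_add_const hlow x)
  have hcount_high : ∀ x,
      primeCount T x ≤ primeCount S3 x + primeCount S4 x + (K + 1) := fun x => by
    have := primeCount_le_add_const hup x
    have := primeCount_union_le S3 S4 x
    omega
  -- limits from Sato-Tate
  have hT1 := hST ε 1 (-1) (-ε) (by linarith) (by linarith) le_rfl le_rfl (by linarith)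
    (by linarith)
  have hT2 := hST (-1) (-ε) ε 1 le_rfl (by linarith) (by linarith) (by linarith) (by linarith)
    le_rfl
  have hT3 := hST (-ε) 1 (-1) ε (by linarith) (by linarith) le_rfl le_rfl (by linarith)
    (by linarith)
  have hT4 := hST (-1) ε (-ε) 1 le_rfl (by linarith) (by linarith) (by linarith) (by linarith)
    le_rfl
  rw [muST_Icc ε 1 (by linarith) (by linarith) le_rfl,
    muST_Icc (-1) (-ε) le_rfl (by linarith) (by linarith)] at hT1
  rw [muST_Icc (-1) (-ε) le_rfl (by linarith) (by linarith),
    muST_Icc ε 1 (by linarith) (by linarith) le_rfl] at hT2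
  rw [muST_Icc (-ε) 1 (by linarith) (by linarith) le_rfl,
    muST_Icc (-1) ε le_rfl (by linarith) (by linarith)] at hT3
  rw [muST_Icc (-1) ε le_rfl (by linarith) (by linarith),
    muST_Icc (-ε) 1 (by linarith) (by linarith) le_rfl] at hT4
  -- numeric bounds on the integrals
  have hb1 : 1 / 2 - ε ≤ stI ε 1 := by
    have h := stI_add 0 ε 1
    have h2 := stI_le (le_of_lt hε0)
    rw [stI_right_half] at h
    linarith
  have hb2 : 1 / 2 - ε ≤ stI (-1) (-ε) := by
    have h := stI_add (-1) (-ε) 0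
    have h2 := stI_le (by linarith : -ε ≤ (0 : ℝ))
    rw [stI_left_half] at h
    linarith
  have hb3 : stI (-ε) 1 ≤ 1 / 2 + ε := by
    have h := stI_add (-ε) 0 1
    have h2 := stI_le (by linarith : -ε ≤ (0 : ℝ))
    rw [stI_right_half] at h
    linarith
  have hb4 : stI (-1) ε ≤ 1 / 2 + ε := by
    have h := stI_add (-1) 0 ε
    have h2 := stI_le (le_of_lt hε0)
    rw [stI_left_half] at h
    linarith
  have hn1 : 0 ≤ stI ε 1 := stI_nonneg (by linarith)
  have hn2 : 0 ≤ stI (-1) (-ε) := stI_nonneg (by linarith)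
  have hn3 : 0 ≤ stI (-ε) 1 := stI_nonneg (by linarith)
  have hn4 : 0 ≤ stI (-1) ε := stI_nonneg (by linarith)
  -- π(x) → ∞
  have hπR : Tendsto (fun x : ℕ => (primePi x : ℝ)) atTop atTop :=
    tendsto_natCast_atTop_atTop.comp primePi_tendsto
  have hconst0 : Tendsto (fun x : ℕ => ((K : ℝ) + 1) / (primePi x : ℝ)) atTop (nhds 0) :=
    tendsto_const_nhds.div_atTop hπR
  -- combined limits
  have hA : Tendsto (fun x : ℕ =>
      (primeCount S1 x : ℝ) / (primePi x : ℝ) + (primeCount S2 x : ℝ) / (primePi x : ℝ)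
        - ((K : ℝ) + 1) / (primePi x : ℝ)) atTop
      (nhds (stI ε 1 * stI (-1) (-ε) + stI (-1) (-ε) * stI ε 1 - 0)) :=
    (hT1.add hT2).sub hconst0
  have hB : Tendsto (fun x : ℕ =>
      (primeCount S3 x : ℝ) / (primePi x : ℝ) + (primeCount S4 x : ℝ) / (primePi x : ℝ)
        + ((K : ℝ) + 1) / (primePi x : ℝ)) atTop
      (nhds (stI (-ε) 1 * stI (-1) ε + stI (-1) ε * stI (-ε) 1 + 0)) :=
    (hT3.add hT4).add hconst0
  -- eventual bounds
  have hlimA : 1 / 2 - 2 * ε - δ / 4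
      < stI ε 1 * stI (-1) (-ε) + stI (-1) (-ε) * stI ε 1 - 0 := by
    nlinarith
  have hlimB : stI (-ε) 1 * stI (-1) ε + stI (-1) ε * stI (-ε) 1 + 0
      < 1 / 2 + 3 * ε + δ / 4 := by
    nlinarith
  have hEA := hA.eventually (eventually_gt_nhds hlimA)
  have hEB := hB.eventually (eventually_lt_nhds hlimB)
  have hEπ : ∀ᶠ x : ℕ in atTop, 0 < primePi x := primePi_tendsto.eventually_gt_atTop 0
  filter_upwards [hEA, hEB, hEπ] with x hxA hxB hxπ
  have hπpos : (0 : ℝ) < (primePi x : ℝ) := by exact_mod_cast hxπ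
  set π' : ℝ := (primePi x : ℝ)
  have hfa : (primeCount S1 x : ℝ) / π' + (primeCount S2 x : ℝ) / π'
      - ((K : ℝ) + 1) / π' ≤ (primeCount T x : ℝ) / π' := by
    have hnum : (primeCount S1 x : ℝ) + (primeCount S2 x : ℝ) - ((K : ℝ) + 1)
        ≤ (primeCount T x : ℝ) := by
      have h := hcount_low x
      have h2 : ((primeCount S1 x + primeCount S2 x : ℕ) : ℝ)
          ≤ ((primeCount T x + (K + 1) : ℕ) : ℝ) := Nat.cast_le.mpr h
      push_cast at h2
      linarith
    calc (primeCount S1 x : ℝ) / π' + (primeCount S2 x : ℝ) / π' - ((K : ℝ) + 1) / π'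
        = ((primeCount S1 x : ℝ) + (primeCount S2 x : ℝ) - ((K : ℝ) + 1)) / π' := by ring
      _ ≤ (primeCount T x : ℝ) / π' := div_le_div_of_nonneg_right hnum hπpos.le
  have hfb : (primeCount T x : ℝ) / π' ≤ (primeCount S3 x : ℝ) / π'
      + (primeCount S4 x : ℝ) / π' + ((K : ℝ) + 1) / π' := by
    have hnum : (primeCount T x : ℝ)
        ≤ (primeCount S3 x : ℝ) + (primeCount S4 x : ℝ) + ((K : ℝ) + 1) := by
      exact_mod_cast hcount_high x
    calc (primeCount T x : ℝ) / π' ≤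
        ((primeCount S3 x : ℝ) + (primeCount S4 x : ℝ) + ((K : ℝ) + 1)) / π' :=
          div_le_div_of_nonneg_right hnum hπpos.le
      _ = (primeCount S3 x : ℝ) / π' + (primeCount S4 x : ℝ) / π' + ((K : ℝ) + 1) / π' := by
          ring
  rw [Real.dist_eq, abs_lt]
  constructor <;> linarith
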